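/- For every rational number a/b ∈ (0,1) with a, b positive integers and a < b, there exists n ∈ ℕ such that R^n(a/b) ∈ {0, 1}, where R is the Romik map. In other words, the orbit of every rational in [0,1] under R eventually hits a fixed point 0 or 1. -/

import Mathlib

noncomputable def romik (x : ℝ) : ℝ :=
  if x < 1/3 then x / (1 - 2*x) else if x < 1/2 then 1/x - 2 else 2 - 1/x

theorem romik_aux : ∀ b : ℕ, ∀ a : ℕ, 0 < a → a ≤ b →
    ∃ n : ℕ, romik^[n] ((a : ℝ)/(b : ℝ)) ∈ ({0, 1} : Set ℝ) := by
  intro b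
  induction b using Nat.strong_induction_on with
  | _ b IH =>
    intro a ha hab
    have hb : 0 < b := lt_of_lt_of_le ha hab
    have hbR : (0:ℝ) < (b:ℝ) := by exact_mod_cast hb
    have haR : (0:ℝ) < (a:ℝ) := by exact_mod_cast ha
    rcases eq_or_lt_of_le hab with heq | hlt
    · refine ⟨0, Or.inr ?_⟩
      simp only [Function.iterate_zero, id]
      rw [heq, div_self (ne_of_gt hbR)]
      rfl
    · have habR : (a:ℝ) < (b:ℝ) := by exact_mod_cast hlt
      by_cases h3 : 3 * a < b
      · -- x < 1/3 : romik x = a / (b - 2a)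
        have h3R : 3 * (a:ℝ) < (b:ℝ) := by exact_mod_cast h3
        have hx : (a:ℝ)/(b:ℝ) < 1/3 := by
          rw [div_lt_div_iff₀ hbR (by norm_num)]; linarith
        have hne : (b:ℝ) - 2*(a:ℝ) ≠ 0 := by linarith
        have hstep : romik ((a:ℝ)/(b:ℝ)) = (a:ℝ)/((b - 2*a : ℕ):ℝ) := by
          rw [romik, if_pos hx]
          have hcast : ((b - 2*a : ℕ):ℝ) = (b:ℝ) - 2*(a:ℝ) := by
            push_cast [Nat.cast_sub (by omega : 2*a ≤ b)]; ring
          rw [hcast]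
          have h1 : 1 - 2*((a:ℝ)/(b:ℝ)) ≠ 0 := by
            rw [sub_ne_zero]
            intro h
            have : (b:ℝ) = 2*(a:ℝ) := by
              field_simp at h; linarith
            linarith
          field_simp
        obtain ⟨n, hn⟩ := IH (b - 2*a) (by omega) a ha (by omega)
        exact ⟨n + 1, by rwa [Function.iterate_succ_apply, hstep]⟩
      · push_neg at h3
        by_cases h2 : 2 * a < b
        · -- 1/3 ≤ x < 1/2 : romik x = (b - 2a) / a
          have h2R : 2 * (a:ℝ) < (b:ℝ) := by exact_mod_cast h2
          have h3R : (b:ℝ) ≤ 3 * (a:ℝ) := by exact_mod_cast h3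
          have hx1 : ¬ ((a:ℝ)/(b:ℝ) < 1/3) := by
            rw [not_lt, le_div_iff₀ hbR]; linarith
          have hx2 : (a:ℝ)/(b:ℝ) < 1/2 := by
            rw [div_lt_div_iff₀ hbR (by norm_num)]; linarith
          have hstep : romik ((a:ℝ)/(b:ℝ)) = ((b - 2*a : ℕ):ℝ)/((a:ℕ):ℝ) := by
            rw [romik, if_neg hx1, if_pos hx2]
            have hcast : ((b - 2*a : ℕ):ℝ) = (b:ℝ) - 2*(a:ℝ) := by
              push_cast [Nat.cast_sub (by omega : 2*a ≤ b)]; ring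
            rw [hcast]
            field_simp
          obtain ⟨n, hn⟩ := IH a hlt (b - 2*a) (by omega) (by omega)
          exact ⟨n + 1, by rwa [Function.iterate_succ_apply, hstep]⟩
        · -- x ≥ 1/2 : romik x = (2a - b) / a
          push_neg at h2
          have h2R : (b:ℝ) ≤ 2 * (a:ℝ) := by exact_mod_cast h2
          have hx1 : ¬ ((a:ℝ)/(b:ℝ) < 1/3) := by
            rw [not_lt, le_div_iff₀ hbR]; linarith
          have hx2 : ¬ ((a:ℝ)/(b:ℝ) < 1/2) := by
            rw [not_lt, le_div_iff₀ hbR]; linarith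
          have hstep : romik ((a:ℝ)/(b:ℝ)) = ((2*a - b : ℕ):ℝ)/((a:ℕ):ℝ) := by
            rw [romik, if_neg hx1, if_neg hx2]
            have hcast : ((2*a - b : ℕ):ℝ) = 2*(a:ℝ) - (b:ℝ) := by
              push_cast [Nat.cast_sub (by omega : b ≤ 2*a)]; ring
            rw [hcast]
            field_simp
          by_cases h0 : 2*a - b = 0
          · refine ⟨1, Or.inl ?_⟩
            simp [Function.iterate_one, hstep, h0]
          · obtain ⟨n, hn⟩ := IH a hlt (2*a - b) (Nat.pos_of_ne_zero h0) (by omega)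
            exact ⟨n + 1, by rwa [Function.iterate_succ_apply, hstep]⟩

theorem romik_rational_orbit_finite (a b : ℕ) (ha : 0 < a) (hab : a < b) :
    ∃ n : ℕ, romik^[n] ((a : ℝ)/(b : ℝ)) ∈ ({0, 1} : Set ℝ) := by
  exact romik_aux b a ha hab.le
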